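/- In the Balanced-Partition reduction above, any first-stage solution X with max_S f₁(X,S) ≤ (3n/2 + 3)b must satisfy |X| = n/2 and X ⊆ {e_1,…,e_n}; moreover, writing b₁ = ∑_{e_i∈X} a_i, one has f₁(X,S1) = (3n/2)b + 4b − b₁ and f₁(X,S2) = (3n/2)b + b + 2b₁, and max{4b − b₁, b + 2b₁} ≤ 3b if and only if b₁ = b. -/
import Mathlib
open Finset

/-- Second-stage completion cost. -/
noncomputable def complMin {ι : Type*} [Fintype ι] [DecidableEq ι]
    (c : ι → ℝ) (X : Finset ι) (p : ℕ) : ℝ :=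
  sInf {v : ℝ | ∃ Y ⊆ Finset.univ \ X, Y.card = p - X.card ∧ v = ∑ e ∈ Y, c e}

/-- The two-stage cost `f₁(X,S)`. -/
noncomputable def f1 {ι : Type*} [Fintype ι] [DecidableEq ι]
    (C c : ι → ℝ) (X : Finset ι) (p : ℕ) : ℝ :=
  ∑ e ∈ X, C e + complMin c X p

lemma complMin_bddBelow {ι : Type*} [Fintype ι] [DecidableEq ι]
    (c : ι → ℝ) (X : Finset ι) (p : ℕ) :
    BddBelow {v : ℝ | ∃ Y ⊆ Finset.univ \ X, Y.card = p - X.card ∧ v = ∑ e ∈ Y, c e} := by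
  apply Set.Finite.bddBelow
  apply Set.Finite.subset (Set.finite_range (fun Y : Finset ι => ∑ e ∈ Y, c e))
  rintro v ⟨Y, _, _, rfl⟩
  exact ⟨Y, rfl⟩

lemma complMin_le {ι : Type*} [Fintype ι] [DecidableEq ι]
    (c : ι → ℝ) (X : Finset ι) (p : ℕ) (Y : Finset ι)
    (hY : Y ⊆ Finset.univ \ X) (hc : Y.card = p - X.card) :
    complMin c X p ≤ ∑ e ∈ Y, c e :=
  csInf_le (complMin_bddBelow c X p) ⟨Y, hY, hc, rfl⟩

lemma le_complMin {ι : Type*} [Fintype ι] [DecidableEq ι]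
    (c : ι → ℝ) (X : Finset ι) (p : ℕ) (q : ℝ)
    (hp : p - X.card ≤ (Finset.univ \ X).card)
    (h : ∀ Y ⊆ Finset.univ \ X, Y.card = p - X.card → q ≤ ∑ e ∈ Y, c e) :
    q ≤ complMin c X p := by
  obtain ⟨Y, hY, hYc⟩ := Finset.exists_subset_card_eq hp
  exact le_csInf ⟨_, Y, hY, hYc, rfl⟩ (by rintro v ⟨Z, h1, h2, rfl⟩; exact h Z h1 h2)

set_option maxHeartbeats 1600000 in
theorem balanced_partition_two_stage_structure (m b : ℕ) (hm : 1 ≤ m)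
    (a : Fin (2 * m) → ℕ) (ha : ∀ i, 0 < a i) (hsum : ∑ i, a i = 2 * b)
    (M : ℝ) (hM : M = 4 * (2 * m) * b)
    (C c1 c2 c3 : (Fin (2 * m) ⊕ Fin m) → ℝ)
    (hC : C = Sum.elim (fun i => 3 * b + (a i : ℝ)) (fun _ => M))
    (hc1 : c1 = Sum.elim (fun i => 2 * (a i : ℝ)) (fun _ => M))
    (hc2 : c2 = Sum.elim (fun i => 6 * b / (2 * m) - (a i : ℝ)) (fun _ => M))
    (hc3 : c3 = Sum.elim (fun _ => M) (fun _ => 0)) :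
    (∀ X : Finset (Fin (2 * m) ⊕ Fin m), X.card ≤ 2 * m →
      max (f1 C c1 X (2 * m)) (max (f1 C c2 X (2 * m)) (f1 C c3 X (2 * m))) ≤
        (3 * m + 3) * b →
      X.card = m ∧ (∀ j : Fin m, Sum.inr j ∉ X) ∧
      f1 C c1 X (2 * m) =
        3 * m * b + 4 * b -
          ∑ i ∈ Finset.univ.filter (fun i => Sum.inl i ∈ X), (a i : ℝ) ∧
      f1 C c2 X (2 * m) =
        3 * m * b + b +
          2 * ∑ i ∈ Finset.univ.filter (fun i => Sum.inl i ∈ X), (a i : ℝ)) ∧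
    (∀ b₁ : ℝ, max (4 * b - b₁) (b + 2 * b₁) ≤ 3 * b ↔ b₁ = b) := by
  have hb : 1 ≤ b := by
    have h2 : (2 * m : ℕ) ≤ ∑ i, a i := by
      calc (2 * m : ℕ) = ∑ _i : Fin (2 * m), 1 := by simp
      _ ≤ ∑ i, a i := Finset.sum_le_sum (fun i _ => ha i)
    omega
  have hm' : (1 : ℝ) ≤ m := by exact_mod_cast hm
  have hb' : (1 : ℝ) ≤ b := by exact_mod_cast hb
  have hsumR : ∑ i, (a i : ℝ) = 2 * b := by
    have := congrArg (fun k : ℕ => (k : ℝ)) hsum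
    push_cast at this; exact this
  have hMnn : 0 ≤ M := by rw [hM]; positivity
  have hCnn : ∀ x, 0 ≤ C x := by
    rintro (i | j) <;> simp [hC] <;> positivity
  have hc1nn : ∀ x, 0 ≤ c1 x := by
    rintro (i | j) <;> simp [hc1] <;> positivity
  have hc3nn : ∀ x, 0 ≤ c3 x := by
    rintro (i | j) <;> simp [hc3, hMnn]
  constructor
  · intro X hXcard hbud
    have h1 : f1 C c1 X (2 * m) ≤ (3 * m + 3) * b := le_trans (le_max_left _ _) hbud
    have h3 : f1 C c3 X (2 * m) ≤ (3 * m + 3) * b :=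
      le_trans (le_trans (le_max_right _ _) (le_max_right _ _)) hbud
    have hcardU : (Finset.univ \ X).card = 2 * m + m - X.card := by
      rw [Finset.card_sdiff_of_subset (Finset.subset_univ X)]; simp
    have hp : 2 * m - X.card ≤ (Finset.univ \ X).card := by omega
    have hcm1 : 0 ≤ complMin c1 X (2 * m) :=
      le_complMin _ _ _ 0 hp (fun Y _ _ => Finset.sum_nonneg (fun x _ => hc1nn x))
    have hCXnn : 0 ≤ ∑ x ∈ X, C x := Finset.sum_nonneg (fun x _ => hCnn x)
    -- Step A: no inr in X
    have hnoR : ∀ j : Fin m, Sum.inr j ∉ X := by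
      intro j hj
      have hMle : M ≤ ∑ e ∈ X, C e := by
        have := Finset.single_le_sum (f := C) (fun x _ => hCnn x) hj
        simpa [hC] using this
      have hf : M ≤ f1 C c1 X (2 * m) := by unfold f1; linarith
      rw [hM] at hf
      nlinarith [h1]
    have hXsubE : ∀ x ∈ X, ∃ i, x = Sum.inl i := by
      rintro (i | j) hx
      · exact ⟨i, rfl⟩
      · exact absurd hx (hnoR j)
    -- Step B: card
    have hXle : X.card ≤ m := by
      by_contra hcon
      push_neg at hcon
      have hCge : ∀ x ∈ X, (3 * b + 1 : ℝ) ≤ C x := by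
        intro x hx
        obtain ⟨i, rfl⟩ := hXsubE x hx
        have : (1 : ℝ) ≤ a i := by exact_mod_cast ha i
        simp only [hC, Sum.elim_inl]
        linarith
      have hns := Finset.card_nsmul_le_sum X C _ hCge
      rw [nsmul_eq_mul] at hns
      have hXc : (m : ℝ) + 1 ≤ X.card := by exact_mod_cast hcon
      have hf : ((m : ℝ) + 1) * (3 * b + 1) ≤ f1 C c1 X (2 * m) := by
        unfold f1
        nlinarith
      nlinarith [h1]
    have hXge : m ≤ X.card := by
      by_contra hcon
      push_neg at hcon
      have hcm3 : M ≤ complMin c3 X (2 * m) := by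
        apply le_complMin _ _ _ _ hp
        intro Y hY hYc
        obtain ⟨x, hxY, i, rfl⟩ : ∃ x ∈ Y, ∃ i, x = Sum.inl i := by
          by_contra hco
          push_neg at hco
          have hYsub : Y ⊆ Finset.univ.map ⟨Sum.inr, Sum.inr_injective⟩ := by
            rintro (i | j) hx
            · exact absurd rfl (hco _ hx i)
            · simp
          have hYm := Finset.card_le_card hYsub
          simp at hYm
          omega
        calc M = c3 (Sum.inl i) := by simp [hc3]
        _ ≤ ∑ e ∈ Y, c3 e := Finset.single_le_sum (fun x _ => hc3nn x) hxY
      have hf : M ≤ f1 C c3 X (2 * m) := by unfold f1; linarith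
      rw [hM] at hf
      nlinarith [h3]
    have hXm : X.card = m := by omega
    -- Step C: structure
    set A := Finset.univ.filter (fun i => Sum.inl i ∈ X) with hA
    set b1 := ∑ i ∈ A, (a i : ℝ) with hb1
    have hemb : Function.Injective (Sum.inl : Fin (2 * m) → Fin (2 * m) ⊕ Fin m) :=
      Sum.inl_injective
    set E : Finset (Fin (2 * m) ⊕ Fin m) := Finset.univ.map ⟨Sum.inl, hemb⟩ with hE
    have hXeq : X = A.map ⟨Sum.inl, hemb⟩ := by
      ext x
      constructor
      · intro hx
        obtain ⟨i, rfl⟩ := hXsubE x hx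
        simp [hA, hx]
      · intro hx
        simp [hA] at hx
        obtain ⟨i, hi, rfl⟩ := hx
        exact hi
    have hXE : X ⊆ E := by rw [hXeq, hE]; exact Finset.map_subset_map.2 (Finset.subset_univ A)
    have hAcard : A.card = m := by
      have := congrArg Finset.card hXeq
      rw [Finset.card_map] at this
      omega
    have hEcard : E.card = 2 * m := by simp [hE]
    set Y0 := E \ X with hY0
    have hY0sub : Y0 ⊆ Finset.univ \ X := by
      intro x hx
      rw [Finset.mem_sdiff] at hx ⊢
      exact ⟨Finset.mem_univ x, hx.2⟩
    have hY0card : Y0.card = 2 * m - X.card := by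
      rw [hY0, Finset.card_sdiff_of_subset hXE, hEcard]
    have hsumsd : ∀ g : (Fin (2 * m) ⊕ Fin m) → ℝ,
        ∑ e ∈ Y0, g e + ∑ e ∈ X, g e = ∑ e ∈ E, g e := by
      intro g; rw [hY0]; exact Finset.sum_sdiff hXE
    have hsumX : ∀ g : (Fin (2 * m) ⊕ Fin m) → ℝ,
        ∑ e ∈ X, g e = ∑ i ∈ A, g (Sum.inl i) := by
      intro g; rw [hXeq, Finset.sum_map]; rfl
    have hsumE : ∀ g : (Fin (2 * m) ⊕ Fin m) → ℝ,
        ∑ e ∈ E, g e = ∑ i, g (Sum.inl i) := by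
      intro g; rw [hE, Finset.sum_map]; rfl
    have hb1nn : 0 ≤ b1 := Finset.sum_nonneg (fun i _ => by positivity)
    have hb1le : b1 ≤ 2 * b := by
      rw [hb1, ← hsumR]
      exact Finset.sum_le_sum_of_subset_of_nonneg (Finset.subset_univ A)
        (fun i _ _ => by positivity)
    -- sums of C
    have hsumCX : ∑ e ∈ X, C e = 3 * m * b + b1 := by
      rw [hsumX C]
      simp only [hC, Sum.elim_inl]
      rw [Finset.sum_add_distrib, Finset.sum_const, hAcard, nsmul_eq_mul, hb1]
      ring
    -- c1 values
    have hc1X : ∑ e ∈ X, c1 e = 2 * b1 := by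
      rw [hsumX c1]; simp only [hc1, Sum.elim_inl]
      rw [← Finset.mul_sum, hb1]
    have hc1E : ∑ e ∈ E, c1 e = 4 * b := by
      rw [hsumE c1]; simp only [hc1, Sum.elim_inl]
      rw [← Finset.mul_sum, hsumR]; ring
    have hc1Y0 : ∑ e ∈ Y0, c1 e = 4 * b - 2 * b1 := by
      have := hsumsd c1; rw [hc1X, hc1E] at this; linarith
    -- c2 values
    have h2m : (2 * m : ℝ) ≠ 0 := by positivity
    have hc2X : ∑ e ∈ X, c2 e = 3 * b - b1 := by
      rw [hsumX c2]; simp only [hc2, Sum.elim_inl]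
      rw [Finset.sum_sub_distrib, Finset.sum_const, hAcard, nsmul_eq_mul, ← hb1]
      field_simp
      ring
    have hc2E : ∑ e ∈ E, c2 e = 4 * b := by
      rw [hsumE c2]; simp only [hc2, Sum.elim_inl]
      rw [Finset.sum_sub_distrib, Finset.sum_const, Finset.card_univ, hsumR]
      simp
      field_simp
      ring
    have hc2Y0 : ∑ e ∈ Y0, c2 e = b + b1 := by
      have := hsumsd c2; rw [hc2X, hc2E] at this; linarith
    -- lower bound for any finset sum of c2
    have hc2lb : ∀ T : Finset (Fin (2 * m) ⊕ Fin m), -(2 * b : ℝ) ≤ ∑ e ∈ T, c2 e := by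
      intro T
      have hterm : ∀ x ∈ T, (Sum.elim (fun i => -(a i : ℝ)) (fun _ => 0) x) ≤ c2 x := by
        rintro (i | j) _
        · simp [hc2]; positivity
        · simp [hc2, hMnn]
      have h1' : ∑ e ∈ T, (Sum.elim (fun i => -(a i : ℝ)) (fun _ => 0) e) ≤ ∑ e ∈ T, c2 e :=
        Finset.sum_le_sum hterm
      have h2' : ∑ e ∈ T, -(Sum.elim (fun i => -(a i : ℝ)) (fun _ => 0) e) ≤
          ∑ e : Fin (2 * m) ⊕ Fin m, -(Sum.elim (fun i => -(a i : ℝ)) (fun _ => 0) e) := by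
        apply Finset.sum_le_sum_of_subset_of_nonneg (Finset.subset_univ T)
        rintro (i | j) _ _ <;> simp <;> positivity
      rw [Fintype.sum_sum_type] at h2'
      simp only [Sum.elim_inl, Sum.elim_inr, neg_neg, neg_zero, Finset.sum_const_zero,
        add_zero] at h2'
      rw [hsumR] at h2'
      rw [Finset.sum_neg_distrib] at h2'
      linarith
    -- exact complMin values
    have hkey : ∀ c' : (Fin (2 * m) ⊕ Fin m) → ℝ, (∀ j, c' (Sum.inr j) = M) →
        (∀ T : Finset (Fin (2 * m) ⊕ Fin m), -(2 * b : ℝ) ≤ ∑ e ∈ T, c' e) →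
        (∑ e ∈ Y0, c' e ≤ M - 2 * b) →
        complMin c' X (2 * m) = ∑ e ∈ Y0, c' e := by
      intro c' hcr hlb hcmp
      apply le_antisymm (complMin_le c' X (2 * m) Y0 hY0sub hY0card)
      apply le_complMin _ _ _ _ hp
      intro Y hYsub hYcard
      by_cases hYE : Y ⊆ E
      · have hYY0 : Y = Y0 := by
          apply Finset.eq_of_subset_of_card_le
          · intro x hx
            rw [hY0, Finset.mem_sdiff]
            exact ⟨hYE hx, (Finset.mem_sdiff.1 (hYsub hx)).2⟩
          · omega
        rw [hYY0]
      · obtain ⟨x, hxY, hxE⟩ := Finset.not_subset.1 hYE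
        obtain (i | j) := x
        · exact absurd (by simp [hE]) hxE
        · have herase := Finset.add_sum_erase Y c' hxY
          have hel := hlb (Y.erase (Sum.inr j))
          rw [hcr j] at herase
          linarith
    have hc1lbT : ∀ T : Finset (Fin (2 * m) ⊕ Fin m), -(2 * b : ℝ) ≤ ∑ e ∈ T, c1 e := by
      intro T
      have : 0 ≤ ∑ e ∈ T, c1 e := Finset.sum_nonneg (fun x _ => hc1nn x)
      nlinarith
    have hcm1eq : complMin c1 X (2 * m) = 4 * b - 2 * b1 := by
      rw [← hc1Y0]
      apply hkey c1 (fun j => by simp [hc1]) hc1lbT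
      rw [hc1Y0, hM]
      nlinarith
    have hcm2eq : complMin c2 X (2 * m) = b + b1 := by
      rw [← hc2Y0]
      apply hkey c2 (fun j => by simp [hc2]) hc2lb
      rw [hc2Y0, hM]
      nlinarith
    refine ⟨hXm, hnoR, ?_, ?_⟩
    · unfold f1; rw [hsumCX, hcm1eq]; ring
    · unfold f1; rw [hsumCX, hcm2eq]; ring
  · intro b₁
    constructor
    · intro h
      have h1 := le_trans (le_max_left _ _) h
      have h2 := le_trans (le_max_right _ _) h
      linarith
    · rintro rfl
      rw [max_le_iff]
      constructor <;> linarith
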